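/- Let Y_D have density f_D(y) = ½ φ_T(y | −6, −4, −5, 1/9) + ½ φ_T(y | 4, 6, 5, 1/9) (a mixture of truncated normals supported on [−6,−4] ∪ [4,6]) and Y_N have density f_N = φ_T(y | −2, 2, 0, 1/16) supported on [−2,2], with Y_D and Y_N independent. Then P(Y_D > Y_N) = 1/2, even though the supports of f_D and f_N are disjoint (so the affinity κ = 0). -/

import Mathlib

open MeasureTheory Real ProbabilityTheory

noncomputable def truncNormalPdf (a b mu s2 y : ℝ) : ℝ :=
  if y ∈ Set.Icc a b then
    Real.exp (-(y - mu) ^ 2 / (2 * s2)) /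
      (∫ t in a..b, Real.exp (-(t - mu) ^ 2 / (2 * s2)))
  else 0

noncomputable def sepTrapfD (y : ℝ) : ℝ :=
  (1/2) * truncNormalPdf (-6) (-4) (-5) (1/9) y +
    (1/2) * truncNormalPdf 4 6 5 (1/9) y

noncomputable def sepTrapfN (y : ℝ) : ℝ :=
  truncNormalPdf (-2) 2 0 (1/16) y

lemma expCont (mu s2 : ℝ) : Continuous (fun t : ℝ => Real.exp (-(t - mu) ^ 2 / (2 * s2))) :=
  Real.continuous_exp.comp (((continuous_id.sub continuous_const).pow 2).neg.div_const _)

lemma expInt_pos (a b mu s2 : ℝ) (hab : a < b) :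
    0 < ∫ t in a..b, Real.exp (-(t - mu) ^ 2 / (2 * s2)) := by
  apply intervalIntegral.intervalIntegral_pos_of_pos_on
  · exact (expCont mu s2).intervalIntegrable a b
  · intro x _; exact Real.exp_pos _
  · exact hab

lemma truncNormalPdf_measurable (a b mu s2 : ℝ) : Measurable (truncNormalPdf a b mu s2) := by
  unfold truncNormalPdf
  exact Measurable.ite measurableSet_Icc ((expCont mu s2).measurable.div_const _) measurable_const

lemma sepTrapfD_measurable : Measurable sepTrapfD := by
  unfold sepTrapfD
  exact ((truncNormalPdf_measurable _ _ _ _).const_mul _).add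
    ((truncNormalPdf_measurable _ _ _ _).const_mul _)

lemma sepTrapfN_measurable : Measurable sepTrapfN := truncNormalPdf_measurable _ _ _ _

theorem separation_trap_AUC_half
    {Ω : Type*} [MeasurableSpace Ω] (P : Measure Ω) [IsProbabilityMeasure P]
    (YD YN : Ω → ℝ) (hYD : Measurable YD) (hYN : Measurable YN)
    (hindep : IndepFun YD YN P)
    (hlawD : Measure.map YD P = volume.withDensity (fun y => ENNReal.ofReal (sepTrapfD y)))
    (hlawN : Measure.map YN P = volume.withDensity (fun y => ENNReal.ofReal (sepTrapfN y))) :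
    P {ω | YN ω < YD ω} = 1/2 := by
  set S : Set ℝ := Set.Icc (-6) (-4) ∪ Set.Icc 4 6 with hSdef
  have hS : MeasurableSet S := measurableSet_Icc.union measurableSet_Icc
  -- YD is almost surely in S
  have hAcompl : P (YD ⁻¹' Sᶜ) = 0 := by
    rw [← Measure.map_apply hYD hS.compl, hlawD, withDensity_apply _ hS.compl]
    have h0 : ∀ y ∈ Sᶜ, ENNReal.ofReal (sepTrapfD y) = 0 := by
      intro y hy
      simp only [hSdef, Set.mem_compl_iff, Set.mem_union, not_or] at hy
      simp [sepTrapfD, truncNormalPdf, hy.1, hy.2]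
    rw [setLIntegral_congr_fun hS.compl h0]
    simp
  -- YN is almost surely in [-2, 2]
  have hBcompl : P (YN ⁻¹' (Set.Icc (-2:ℝ) 2)ᶜ) = 0 := by
    rw [← Measure.map_apply hYN measurableSet_Icc.compl, hlawN,
      withDensity_apply _ measurableSet_Icc.compl]
    have h0 : ∀ y ∈ (Set.Icc (-2:ℝ) 2)ᶜ, ENNReal.ofReal (sepTrapfN y) = 0 := by
      intro y hy
      simp only [Set.mem_compl_iff] at hy
      simp [sepTrapfN, truncNormalPdf, hy]
    rw [setLIntegral_congr_fun measurableSet_Icc.compl h0]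
    simp
  -- the probability that YD lands in [4,6] is 1/2
  have hC : 0 < ∫ t in (4:ℝ)..6, Real.exp (-(t - 5) ^ 2 / (2 * (1/9))) :=
    expInt_pos 4 6 5 (1/9) (by norm_num)
  set C : ℝ := ∫ t in (4:ℝ)..6, Real.exp (-(t - 5) ^ 2 / (2 * (1/9))) with hCdef
  have hF : P (YD ⁻¹' Set.Icc 4 6) = 1/2 := by
    rw [← Measure.map_apply hYD measurableSet_Icc, hlawD, withDensity_apply _ measurableSet_Icc]
    have h1 : ∀ y ∈ Set.Icc (4:ℝ) 6, ENNReal.ofReal (sepTrapfD y) =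
        ENNReal.ofReal ((1/2) * (Real.exp (-(y - 5) ^ 2 / (2 * (1/9))) / C)) := by
      intro y hy
      have hy1 : y ∉ Set.Icc (-6:ℝ) (-4) := by
        simp only [Set.mem_Icc] at hy ⊢; intro h; linarith [hy.1]
      simp [sepTrapfD, truncNormalPdf, hy1, hy, hCdef]
    rw [setLIntegral_congr_fun measurableSet_Icc h1]
    have hint : IntegrableOn
        (fun y : ℝ => (1/2) * (Real.exp (-(y - 5) ^ 2 / (2 * (1/9))) / C))
        (Set.Icc 4 6) volume :=
      (continuous_const.mul ((expCont 5 (1/9)).div_const C)).integrableOn_Icc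
    have hnn : 0 ≤ᵐ[volume.restrict (Set.Icc (4:ℝ) 6)]
        (fun y : ℝ => (1/2) * (Real.exp (-(y - 5) ^ 2 / (2 * (1/9))) / C)) :=
      Filter.Eventually.of_forall fun y => by positivity
    rw [← ofReal_integral_eq_lintegral_ofReal hint hnn]
    have hval : (∫ y in Set.Icc (4:ℝ) 6,
        (1/2) * (Real.exp (-(y - 5) ^ 2 / (2 * (1/9))) / C)) = 1/2 := by
      rw [MeasureTheory.integral_Icc_eq_integral_Ioc,
        ← intervalIntegral.integral_of_le (by norm_num : (4:ℝ) ≤ 6),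
        intervalIntegral.integral_const_mul, intervalIntegral.integral_div, ← hCdef,
        div_self hC.ne']
      ring
    rw [hval]
    rw [ENNReal.ofReal_div_of_pos (by norm_num)]
    simp
  -- almost surely both constraints hold
  have hae : ∀ᵐ ω ∂P, YD ω ∈ S ∧ YN ω ∈ Set.Icc (-2:ℝ) 2 := by
    rw [Filter.eventually_iff, mem_ae_iff]
    have hsub : {ω | YD ω ∈ S ∧ YN ω ∈ Set.Icc (-2:ℝ) 2}ᶜ ⊆
        (YD ⁻¹' Sᶜ) ∪ (YN ⁻¹' (Set.Icc (-2:ℝ) 2)ᶜ) := by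
      intro ω hω
      simp only [Set.mem_compl_iff, Set.mem_setOf_eq, not_and_or] at hω
      rcases hω with h | h
      · exact Or.inl h
      · exact Or.inr h
    exact measure_mono_null hsub (measure_union_null hAcompl hBcompl)
  have heq : {ω | YN ω < YD ω} =ᵐ[P] (YD ⁻¹' Set.Icc 4 6) := by
    rw [Filter.eventuallyEq_set]
    filter_upwards [hae] with ω hω
    obtain ⟨hD, hN⟩ := hω
    simp only [Set.mem_Icc] at hN
    constructor
    · intro hlt
      rcases hD with h | h
      · simp only [Set.mem_Icc] at h
        exfalso; linarith [h.2, hN.1]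
      · exact h
    · intro h
      have h' := Set.mem_Icc.mp h
      show YN ω < YD ω
      linarith [h'.1, hN.2]
  rw [measure_congr heq, hF]
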